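/- For γ ∈ (0,1], the function f(r) = (1-γ)((1+r)^γ - 1) - γ + γ(1+r)^(γ-1) satisfies f(r) ≥ 0 for all r ≥ 0. -/
import Mathlib


theorem stmt_0 (γ : ℝ) (hγ0 : 0 < γ) (hγ1 : γ ≤ 1) (r : ℝ) (hr : 0 ≤ r) :
    0 ≤ (1 - γ) * ((1 + r) ^ γ - 1) - γ + γ * (1 + r) ^ (γ - 1) := by
  set t : ℝ := 1 + r with ht
  have ht0 : (0:ℝ) < t := by positivity
  have ha : (0:ℝ) < t ^ (γ - 1) := Real.rpow_pos_of_pos ht0 _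
  -- AM-GM: t^(1-γ) * 1^γ ≤ (1-γ)*t + γ*1
  have amgm : t ^ (1 - γ) ≤ (1 - γ) * t + γ * 1 := by
    have := Real.geom_mean_le_arith_mean2_weighted (w₁ := 1 - γ) (w₂ := γ)
      (p₁ := t) (p₂ := 1) (by linarith) hγ0.le ht0.le zero_le_one (by ring)
    simpa using this
  have key : (1:ℝ) ≤ ((1 - γ) * t + γ) * t ^ (γ - 1) := by
    have h1 : t ^ (1 - γ) * t ^ (γ - 1) = 1 := by
      rw [← Real.rpow_add ht0]; norm_num
    calc (1:ℝ) = t ^ (1 - γ) * t ^ (γ - 1) := h1.symm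
      _ ≤ ((1 - γ) * t + γ) * t ^ (γ - 1) := by
          apply mul_le_mul_of_nonneg_right _ ha.le
          linarith [amgm]
  have htγ : t ^ γ = t * t ^ (γ - 1) := by
    rw [show γ = 1 + (γ - 1) by ring, Real.rpow_add ht0, Real.rpow_one]
    ring_nf
  rw [htγ]
  nlinarith [key]
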